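/- For a signed bipartite graph (G, σ) and a rational p/q in [2,4] with p even and p/q in simplest form subject to p even: χ_c(G, σ) ≤ p/q if and only if (G, σ) admits a switching homomorphism to B_{p;q}. -/

import Mathlib

/-- A signed graph: two symmetric edge relations (positive and negative edges).
Parallel edges of different signs (digons) and negative loops are representable;
positive loops are disallowed (graphs in the paper have no loops unless specified,
loops occurring in circular cliques are always negative). -/
structure SGraph (V : Type) where
  pos : V → V → Prop
  neg : V → V → Prop
  pos_symm : ∀ u v, pos u v → pos v u
  neg_symm : ∀ u v, neg u v → neg v u
  pos_irrefl : ∀ v, ¬ pos v v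

namespace SGraph

variable {V W : Type}

/-- An edge-sign preserving homomorphism: preserves adjacency and edge signs. -/
def IsSpHom (G : SGraph V) (H : SGraph W) (f : V → W) : Prop :=
  (∀ u v, G.pos u v → H.pos (f u) (f v)) ∧ (∀ u v, G.neg u v → H.neg (f u) (f v))

/-- The signed graph obtained from `G` by switching at the set of vertices where `s` is `true`:
the sign of an edge is flipped exactly when its endpoints get different values of `s`. -/
def switch (G : SGraph V) (s : V → Bool) : SGraph V where
  pos u v := (s u = s v ∧ G.pos u v) ∨ (s u ≠ s v ∧ G.neg u v)
  neg u v := (s u = s v ∧ G.neg u v) ∨ (s u ≠ s v ∧ G.pos u v)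
  pos_symm := by
    rintro u v (⟨h, hp⟩ | ⟨h, hn⟩)
    · exact Or.inl ⟨h.symm, G.pos_symm u v hp⟩
    · exact Or.inr ⟨fun e => h e.symm, G.neg_symm u v hn⟩
  neg_symm := by
    rintro u v (⟨h, hn⟩ | ⟨h, hp⟩)
    · exact Or.inl ⟨h.symm, G.neg_symm u v hn⟩
    · exact Or.inr ⟨fun e => h e.symm, G.pos_symm u v hp⟩
  pos_irrefl := by
    rintro v (⟨_, hp⟩ | ⟨h, _⟩)
    · exact G.pos_irrefl v hp
    · exact h rfl

/-- A switching homomorphism: an edge-sign preserving homomorphism after switching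
at a suitable set of vertices of the source (equivalently, a vertex map preserving
adjacency and the signs of closed walks). -/
def SwHom (G : SGraph V) (H : SGraph W) : Prop :=
  ∃ (s : V → Bool) (f : V → W), (G.switch s).IsSpHom H f

/-- The underlying graph of the signed graph is bipartite. -/
def Bipartite (G : SGraph V) : Prop :=
  ∃ c : V → Bool, ∀ u v, G.pos u v ∨ G.neg u v → c u ≠ c v

end SGraph

/-- `x` reduced modulo `r` into `[0, r)` (for `r > 0`). -/
noncomputable def rmod (x r : ℝ) : ℝ := x - r * ⌊x / r⌋

/-- The circular distance between the points `x` and `y` of the circle of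
circumference `r` (the length of the shorter arc joining them). -/
noncomputable def cdist (r x y : ℝ) : ℝ := min (rmod (x - y) r) (rmod (y - x) r)

namespace SGraph

variable {V : Type}

/-- A circular `r`-coloring of a signed graph: vertices get points of a circle of
circumference `r` such that the endpoints of each positive edge are at circular
distance at least `1`, and each endpoint of a negative edge is at circular distance
at least `1` from the antipode of the other endpoint (equivalently, the endpoints of
a negative edge are at circular distance at most `r/2 - 1`). -/
def IsCircColoring (G : SGraph V) (r : ℝ) (φ : V → ℝ) : Prop :=
  (∀ u v, G.pos u v → 1 ≤ cdist r (φ u) (φ v)) ∧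
  (∀ u v, G.neg u v → 1 ≤ cdist r (φ u) (φ v + r / 2))

/-- The circular chromatic number of a signed graph. -/
noncomputable def circChrom (G : SGraph V) : ℝ :=
  sInf {r : ℝ | 1 ≤ r ∧ ∃ φ : V → ℝ, G.IsCircColoring r φ}

end SGraph

/-- The signed circular clique `K^s_{p;q}` on vertices `{0, …, p-1}`:
`ij` is a positive edge iff `q ≤ |i-j| ≤ p-q`, and `ij` is a negative edge iff
`|i-j| ≤ p/2 - q` or `|i-j| ≥ p/2 + q` (stated multiplied by `2` to avoid division;
`p` is even in all uses).  In particular there is a negative loop at every vertex. -/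
def Ksclique (p q : ℕ) : SGraph (Fin p) where
  pos i j := i ≠ j ∧ (q : ℤ) ≤ |(i.val : ℤ) - (j.val : ℤ)| ∧
    |(i.val : ℤ) - (j.val : ℤ)| ≤ (p : ℤ) - q
  neg i j := 2 * |(i.val : ℤ) - (j.val : ℤ)| ≤ (p : ℤ) - 2 * q ∨
    (p : ℤ) + 2 * q ≤ 2 * |(i.val : ℤ) - (j.val : ℤ)|
  pos_symm := by
    rintro i j ⟨hne, h1, h2⟩
    refine ⟨hne.symm, ?_, ?_⟩ <;> rwa [abs_sub_comm]
  neg_symm := by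
    rintro i j (h | h)
    · left; rwa [abs_sub_comm]
    · right; rwa [abs_sub_comm]
  pos_irrefl := fun i h => h.1 rfl

/-- The signed bipartite circular clique `B_{p;q}`: the subgraph of `K^s_{p;q}`
consisting of the edges joining an even-labelled vertex to an odd-labelled vertex,
with the inherited signs. -/
def Bclique (p q : ℕ) : SGraph (Fin p) where
  pos i j := (Ksclique p q).pos i j ∧ i.val % 2 ≠ j.val % 2
  neg i j := (Ksclique p q).neg i j ∧ i.val % 2 ≠ j.val % 2
  pos_symm := by
    rintro i j ⟨h, hp⟩
    exact ⟨(Ksclique p q).pos_symm i j h, fun e => hp e.symm⟩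
  neg_symm := by
    rintro i j ⟨h, hp⟩
    exact ⟨(Ksclique p q).neg_symm i j h, fun e => hp e.symm⟩
  pos_irrefl := fun i h => h.2 rfl

namespace NWZ


lemma rmod_nonneg {r : ℝ} (hr : 0 < r) (x : ℝ) : 0 ≤ rmod x r := by
  have h : (⌊x / r⌋ : ℝ) ≤ x / r := Int.floor_le _
  have h2 : (⌊x / r⌋ : ℝ) * r ≤ x := (le_div_iff₀ hr).mp h
  simp only [rmod]; linarith

lemma rmod_lt {r : ℝ} (hr : 0 < r) (x : ℝ) : rmod x r < r := by
  have h : x / r < ⌊x / r⌋ + 1 := Int.lt_floor_add_one _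
  have h2 : x < ((⌊x / r⌋ : ℝ) + 1) * r := (div_lt_iff₀ hr).mp h
  simp only [rmod]; nlinarith

lemma rmod_add_int {r : ℝ} (hr : 0 < r) (x : ℝ) (k : ℤ) :
    rmod (x + k * r) r = rmod x r := by
  have hr' : r ≠ 0 := hr.ne'
  have h : (x + k * r) / r = x / r + k := by field_simp
  simp only [rmod, h, Int.floor_add_intCast]
  push_cast
  ring

lemma rmod_le_self {r : ℝ} (hr : 0 < r) {x : ℝ} (hx : 0 ≤ x) : rmod x r ≤ x := by
  have hf : (0:ℤ) ≤ ⌊x / r⌋ := Int.floor_nonneg.mpr (div_nonneg hx hr.le)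
  have h2 : (0:ℝ) ≤ r * ⌊x / r⌋ := mul_nonneg hr.le (by exact_mod_cast hf)
  simp only [rmod]; linarith

lemma cdist_le_abs {r : ℝ} (hr : 0 < r) (x y : ℝ) (k : ℤ) :
    cdist r x y ≤ |x - y - k * r| := by
  rcases le_or_gt 0 (x - y - k * r) with h | h
  · have h1 : rmod (x - y) r = rmod (x - y - k * r) r := by
      rw [← rmod_add_int hr (x - y - k*r) k]; ring_nf
    calc cdist r x y ≤ rmod (x - y) r := min_le_left _ _
    _ ≤ x - y - k*r := by rw [h1]; exact rmod_le_self hr h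
    _ ≤ |x - y - k*r| := le_abs_self _
  · have h1 : rmod (y - x) r = rmod (y - x + k * r) r := (rmod_add_int hr _ k).symm
    have h0 : 0 ≤ y - x + k * r := by linarith
    calc cdist r x y ≤ rmod (y - x) r := min_le_right _ _
    _ ≤ y - x + k*r := by rw [h1]; exact rmod_le_self hr h0
    _ = |x - y - k*r| := by rw [abs_of_neg h]; ring

lemma cdist_eq_abs {r : ℝ} (hr : 0 < r) (x y : ℝ) :
    ∃ k : ℤ, cdist r x y = |x - y - k * r| := by
  rcases min_cases (rmod (x - y) r) (rmod (y - x) r) with ⟨h, _⟩ | ⟨h, _⟩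
  · refine ⟨⌊(x - y) / r⌋, ?_⟩
    rw [cdist, h, rmod, abs_of_nonneg]
    · ring
    · have := rmod_nonneg hr (x - y); simp only [rmod] at this; linarith
  · refine ⟨-⌊(y - x) / r⌋, ?_⟩
    rw [cdist, h, rmod]
    rw [show x - y - (-⌊(y - x) / r⌋ : ℤ) * r = -((y-x) - r * ⌊(y - x)/r⌋) by push_cast; ring,
      abs_neg, abs_of_nonneg]
    have := rmod_nonneg hr (y - x); simp only [rmod] at this; linarith

lemma le_cdist {r c x y : ℝ} (hr : 0 < r) (h : ∀ k : ℤ, c ≤ |x - y - k * r|) :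
    c ≤ cdist r x y := by
  obtain ⟨k, hk⟩ := cdist_eq_abs hr x y
  rw [hk]; exact h k

lemma cdist_congr {r x y x' y' : ℝ} (hr : 0 < r) (k : ℤ)
    (h : x - y = x' - y' + k * r) : cdist r x y = cdist r x' y' := by
  have h2 : y - x = y' - x' + (-k : ℤ) * r := by push_cast; linarith
  rw [cdist, cdist, h, h2, rmod_add_int hr, rmod_add_int hr]

lemma cdist_scale {r x y c : ℝ} (hc : 0 < c) :
    cdist (c * r) (c * x) (c * y) = c * cdist r x y := by
  have key : ∀ z, rmod (c * z) (c * r) = c * rmod z r := by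
    intro z
    simp only [rmod, mul_div_mul_left z r hc.ne']
    ring
  simp only [cdist, ← mul_sub, key]
  rcases le_total (rmod (x - y) r) (rmod (y - x) r) with h | h
  · rw [min_eq_left h, min_eq_left (by nlinarith)]
  · rw [min_eq_right h, min_eq_right (by nlinarith)]

lemma cdist_lip {r : ℝ} (hr : 0 < r) (x y x' y' : ℝ) :
    cdist r x y ≤ cdist r x' y' + |x - x'| + |y - y'| := by
  obtain ⟨k, hk⟩ := cdist_eq_abs hr x' y'
  have h1 : cdist r x y ≤ |x - y - k * r| := cdist_le_abs hr x y k
  have h2 : |x - y - k * r| ≤ |x' - y' - k * r| + |x - x'| + |y - y'| := by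
    have : x - y - k*r = (x' - y' - k*r) + (x - x') + -(y - y') := by ring
    rw [this]
    calc |x' - y' - ↑k * r + (x - x') + -(y - y')| ≤ |x' - y' - ↑k * r + (x - x')| + |-(y - y')| := abs_add_le _ _
    _ ≤ |x' - y' - ↑k * r| + |x - x'| + |y - y'| := by
        rw [abs_neg]; exact add_le_add (abs_add_le _ _) le_rfl
  rw [hk]; linarith


/-- positive-type relation on integer differences -/
def PR (p q e : ℤ) : Prop := ∀ k : ℤ, q ≤ |e - k * p|
/-- negative-type relation -/
def NR (p q e : ℤ) : Prop := ∀ k : ℤ, 2 * q ≤ |2 * e - p - 2 * (k * p)|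

lemma PR_shift {p q e : ℤ} (h : PR p q e) (j : ℤ) : PR p q (e + j * p) := by
  intro k
  have := h (k - j)
  calc q ≤ |e - (k - j) * p| := this
  _ = |e + j * p - k * p| := by ring_nf

lemma PR_shift_iff {p q e : ℤ} (j : ℤ) : PR p q (e + j * p) ↔ PR p q e := by
  constructor
  · intro h
    have := PR_shift h (-j)
    simpa using this
  · exact fun h => PR_shift h j

lemma NR_shift {p q e : ℤ} (h : NR p q e) (j : ℤ) : NR p q (e + j * p) := by
  intro k
  have := h (k - j)
  calc 2*q ≤ |2*e - p - 2*((k - j) * p)| := this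
  _ = |2*(e + j * p) - p - 2*(k * p)| := by ring_nf

lemma NR_shift_iff {p q e : ℤ} (j : ℤ) : NR p q (e + j * p) ↔ NR p q e := by
  constructor
  · intro h; have := NR_shift h (-j); simpa using this
  · exact fun h => NR_shift h j




lemma Kspos_iff {p q : ℕ} (hq : 0 < q) (h2q : 2 * q ≤ p) (i j : Fin p) :
    (Ksclique p q).pos i j ↔ PR p q ((i.val : ℤ) - (j.val : ℤ)) := by
  have hi := i.isLt
  have hj := j.isLt
  set d : ℤ := (i.val : ℤ) - (j.val : ℤ) with hd
  have hp' : (0:ℤ) ≤ p := by positivity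
  constructor
  · rintro ⟨hne, h1, h2⟩ k
    obtain ⟨K, hK, hKb⟩ : ∃ K : ℤ, k * (p:ℤ) = K ∧ (K ≤ -p ∨ K = 0 ∨ (p:ℤ) ≤ K) := by
      have hcase : k ≤ -1 ∨ k = 0 ∨ 1 ≤ k := by omega
      rcases hcase with h' | h' | h'
      · exact ⟨k * p, rfl, Or.inl (by nlinarith)⟩
      · exact ⟨k * p, rfl, Or.inr (Or.inl (by rw [h']; ring))⟩
      · exact ⟨k * p, rfl, Or.inr (Or.inr (by nlinarith))⟩
    rw [show d - k * (p:ℤ) = d - K by rw [hK]]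
    rw [le_abs]
    rcases abs_cases d with ⟨he, _⟩ | ⟨he, _⟩ <;> rw [he] at h1 h2 <;> omega
  · intro h
    have h0 : (q:ℤ) ≤ |d| := by simpa using h 0
    have h1 : (q:ℤ) ≤ |d - p| := by simpa using h 1
    have hm : (q:ℤ) ≤ |d + p| := by
      have := h (-1)
      rw [show d - (-1) * (p:ℤ) = d + p by ring] at this
      exact this
    rw [le_abs] at h0 h1 hm
    refine ⟨?_, ?_, ?_⟩
    · intro heq
      rw [heq] at hd
      simp at hd
      omega
    · rw [le_abs]; omega
    · rw [abs_le]; omega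

lemma Ksneg_iff {p q : ℕ} (hq : 0 < q) (h2q : 2 * q ≤ p) (i j : Fin p) :
    (Ksclique p q).neg i j ↔ NR p q ((i.val : ℤ) - (j.val : ℤ)) := by
  have hi := i.isLt
  have hj := j.isLt
  have hp' : (0:ℤ) ≤ p := by positivity
  constructor
  · rintro (h | h) k <;>
    · obtain ⟨K, hK, hKb⟩ : ∃ K : ℤ, k * (p:ℤ) = K ∧
          (K ≤ -2*p ∨ K = -p ∨ K = 0 ∨ (p:ℤ) ≤ K) := by
        have hcase : k ≤ -2 ∨ k = -1 ∨ k = 0 ∨ 1 ≤ k := by omega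
        rcases hcase with h' | h' | h' | h'
        · exact ⟨k * p, rfl, Or.inl (by nlinarith)⟩
        · exact ⟨k * p, rfl, Or.inr (Or.inl (by rw [h']; ring))⟩
        · exact ⟨k * p, rfl, Or.inr (Or.inr (Or.inl (by rw [h']; ring)))⟩
        · exact ⟨k * p, rfl, Or.inr (Or.inr (Or.inr (by nlinarith)))⟩
      rw [show 2*((i.val:ℤ) - (j.val:ℤ)) - (p:ℤ) - 2*(k*p)
          = 2*((i.val:ℤ) - (j.val:ℤ)) - p - 2*K by rw [hK]]
      rw [le_abs]
      rcases abs_cases ((i.val:ℤ) - (j.val:ℤ)) with ⟨he, _⟩ | ⟨he, _⟩ <;>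
        rw [he] at h <;> omega
  · intro h
    have h0 : 2*(q:ℤ) ≤ |2*((i.val:ℤ) - (j.val:ℤ)) - p| := by simpa using h 0
    have hm : 2*(q:ℤ) ≤ |2*((i.val:ℤ) - (j.val:ℤ)) + p| := by
      have := h (-1)
      rw [show 2*((i.val:ℤ) - (j.val:ℤ)) - (p:ℤ) - 2*((-1) * p)
          = 2*((i.val:ℤ) - (j.val:ℤ)) + p by ring] at this
      exact this
    rw [le_abs] at h0 hm
    show 2 * |(i.val : ℤ) - (j.val : ℤ)| ≤ (p : ℤ) - 2 * q ∨
      (p : ℤ) + 2 * q ≤ 2 * |(i.val : ℤ) - (j.val : ℤ)|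
    rcases abs_cases ((i.val:ℤ) - (j.val:ℤ)) with ⟨he, _⟩ | ⟨he, _⟩ <;>
      rw [he] <;> omega

lemma roundKey {cq P E : ℤ} {A : ℝ} {g : ℤ}
    (hE : |(E : ℝ) - A| < g)
    (hreal : ∀ k : ℤ, (cq : ℝ) ≤ |A - (k : ℝ) * (P : ℝ)|)
    (hstep : ∀ k : ℤ, |E - k * P| < cq → |E - k * P| ≤ cq - g) :
    ∀ k : ℤ, cq ≤ |E - k * P| := by
  intro k
  by_contra hcon
  push_neg at hcon
  have h1 := hstep k hcon
  have h2 := hreal k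
  have h3 : |A - (k:ℝ) * P| ≤ |(E:ℝ) - (k:ℝ) * P| + |(E:ℝ) - A| := by
    calc |A - (k:ℝ) * P| = |((E:ℝ) - (k:ℝ)*P) - ((E:ℝ) - A)| := by ring_nf
    _ ≤ |(E:ℝ) - (k:ℝ)*P| + |(E:ℝ) - A| := abs_sub _ _
  have h4 : |(E:ℝ) - (k:ℝ) * P| = ((|E - k * P| : ℤ) : ℝ) := by push_cast; ring_nf
  have h5 : ((|E - k*P| : ℤ) : ℝ) ≤ ((cq : ℝ) - (g:ℝ)) := by exact_mod_cast h1
  rw [h4] at h3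
  linarith

end NWZ
namespace NWZ

open SGraph

lemma coloring_scale {V : Type} {G : SGraph V} {r r' : ℝ} {φ : V → ℝ}
    (hr : 0 < r) (hle : r ≤ r') (h : G.IsCircColoring r φ) :
    G.IsCircColoring r' (fun v => (r' / r) * φ v) := by
  have hc : 0 < r' / r := div_pos (lt_of_lt_of_le hr hle) hr
  have hc1 : 1 ≤ r' / r := (one_le_div hr).mpr hle
  have hrr : (r' / r) * r = r' := div_mul_cancel₀ _ hr.ne'
  constructor
  · intro u v huv
    have h1 := h.1 u v huv
    have h2 : cdist ((r'/r) * r) ((r'/r) * φ u) ((r'/r) * φ v)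
        = (r'/r) * cdist r (φ u) (φ v) := cdist_scale hc
    rw [hrr] at h2
    rw [h2]
    nlinarith
  · intro u v huv
    have h1 := h.2 u v huv
    have h2 : cdist ((r'/r) * r) ((r'/r) * φ u) ((r'/r) * (φ v + r / 2))
        = (r'/r) * cdist r (φ u) (φ v + r / 2) := cdist_scale hc
    rw [hrr] at h2
    have h3 : (r'/r) * (φ v + r / 2) = (r'/r) * φ v + r' / 2 := by
      field_simp
    rw [h3] at h2
    rw [h2]
    nlinarith

lemma coloring_rmod {V : Type} {G : SGraph V} {r : ℝ} {φ : V → ℝ}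
    (hr : 0 < r) (h : G.IsCircColoring r φ) :
    G.IsCircColoring r (fun v => rmod (φ v) r) := by
  constructor
  · intro u v huv
    have h1 := h.1 u v huv
    have h2 : cdist r (rmod (φ u) r) (rmod (φ v) r) = cdist r (φ u) (φ v) := by
      apply cdist_congr hr (⌊φ v / r⌋ - ⌊φ u / r⌋)
      simp only [rmod]
      push_cast
      ring
    rw [h2]; exact h1
  · intro u v huv
    have h1 := h.2 u v huv
    have h2 : cdist r (rmod (φ u) r) (rmod (φ v) r + r / 2)
        = cdist r (φ u) (φ v + r / 2) := by
      apply cdist_congr hr (⌊φ v / r⌋ - ⌊φ u / r⌋)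
      simp only [rmod]
      push_cast
      ring
    rw [h2]; exact h1

lemma cdist4_of_odd {e : ℤ} (he : e % 2 = 1) {x y : ℝ} (hxy : x - y = (e : ℝ)) :
    1 ≤ cdist 4 x y := by
  apply le_cdist (by norm_num)
  intro k
  rw [hxy, show (e:ℝ) - (k:ℝ) * 4 = ((e - k * 4 : ℤ) : ℝ) by push_cast; ring,
    ← Int.cast_abs]
  have h1 : 1 ≤ |e - k * 4| := by
    rcases abs_cases (e - k * 4) with ⟨h, _⟩ | ⟨h, _⟩ <;> omega
  exact_mod_cast h1

lemma bip_coloring {V : Type} {G : SGraph V} {c : V → Bool}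
    (hc : ∀ u v, G.pos u v ∨ G.neg u v → c u ≠ c v) :
    G.IsCircColoring 4 (fun v => if c v then 1 else 0) := by
  constructor
  · intro u v huv
    have hne := hc u v (Or.inl huv)
    cases hcu : c u <;> cases hcv : c v <;> rw [hcu, hcv] at hne <;> try exact absurd rfl hne
    · exact cdist4_of_odd (e := -1) (by norm_num) (by simp [hcu, hcv])
    · exact cdist4_of_odd (e := 1) (by norm_num) (by simp [hcu, hcv])
  · intro u v huv
    have hne := hc u v (Or.inr huv)
    cases hcu : c u <;> cases hcv : c v <;> rw [hcu, hcv] at hne <;> try exact absurd rfl hne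
    · exact cdist4_of_odd (e := -3) (by norm_num) (by simp [hcu, hcv]; norm_num)
    · exact cdist4_of_odd (e := -1) (by norm_num) (by simp [hcu, hcv]; norm_num)

end NWZ
namespace NWZ

open SGraph

lemma Ks_coloring {p q : ℕ} (hq : 0 < q) (h2q : 2 * q ≤ p) :
    (Ksclique p q).IsCircColoring ((p : ℝ) / q) (fun i => (i.val : ℝ) / q) := by
  have hq' : (0 : ℝ) < q := by exact_mod_cast hq
  have hp' : (0 : ℝ) < p := by
    have : 0 < p := by omega
    exact_mod_cast this
  have hr : (0 : ℝ) < (p : ℝ) / q := div_pos hp' hq'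
  constructor
  · intro i j hij
    have hPR := (Kspos_iff hq h2q i j).mp hij
    apply le_cdist hr
    intro k
    rw [show (i.val : ℝ)/q - (j.val : ℝ)/q - (k:ℝ) * ((p:ℝ)/q)
        = (((i.val : ℤ) - (j.val : ℤ) - k * p : ℤ) : ℝ) / q by push_cast; field_simp,
      abs_div, abs_of_pos hq', le_div_iff₀ hq', one_mul, ← Int.cast_abs]
    exact_mod_cast hPR k
  · intro i j hij
    have hNR := (Ksneg_iff hq h2q i j).mp hij
    apply le_cdist hr
    intro k
    rw [show (i.val : ℝ)/q - ((j.val : ℝ)/q + ((p:ℝ)/q)/2) - (k:ℝ) * ((p:ℝ)/q)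
        = ((2*((i.val : ℤ) - (j.val : ℤ)) - p - 2*(k * p) : ℤ) : ℝ) / (2*q) by
          push_cast; field_simp; ring,
      abs_div, abs_of_pos (by linarith : (0:ℝ) < 2*(q:ℝ)), le_div_iff₀ (by linarith), one_mul,
      ← Int.cast_abs]
    have := hNR k
    have h2 : ((2:ℝ) * q) = (((2*q : ℤ)) : ℝ) := by push_cast; ring
    rw [h2]
    exact_mod_cast this

lemma B_coloring {p q : ℕ} (hq : 0 < q) (h2q : 2 * q ≤ p) :
    (Bclique p q).IsCircColoring ((p : ℝ) / q) (fun i => (i.val : ℝ) / q) := by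
  have h := Ks_coloring hq h2q
  exact ⟨fun u v huv => h.1 u v huv.1, fun u v huv => h.2 u v huv.1⟩

/-- From a switching homomorphism to a signed graph with a circular coloring, get a
circular coloring of the source. -/
lemma coloring_of_swhom {V W : Type} {G : SGraph V} {H : SGraph W} {r : ℝ} {ψ : W → ℝ}
    (hr : 0 < r) (hcol : H.IsCircColoring r ψ) {s : V → Bool} {f : V → W}
    (hhom : (G.switch s).IsSpHom H f) :
    G.IsCircColoring r (fun v => ψ (f v) + if s v then r / 2 else 0) := by
  constructor
  · intro u v huv
    show 1 ≤ cdist r (ψ (f u) + if s u then r/2 else 0) (ψ (f v) + if s v then r/2 else 0)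
    by_cases hsv : s u = s v
    · have hH := hhom.1 u v (Or.inl ⟨hsv, huv⟩)
      have h2 : cdist r (ψ (f u) + if s u then r/2 else 0) (ψ (f v) + if s v then r/2 else 0)
          = cdist r (ψ (f u)) (ψ (f v)) := by
        apply cdist_congr hr 0
        rw [hsv]
        push_cast
        ring
      rw [h2]
      exact hcol.1 _ _ hH
    · have hH := hhom.2 u v (Or.inr ⟨hsv, huv⟩)
      have hc := hcol.2 _ _ hH
      cases hsu' : s u <;> cases hsv' : s v <;> rw [hsu', hsv'] at hsv <;>
        try exact absurd rfl hsv
      · simpa [hsu', hsv'] using hc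
      · simp [hsu', hsv']
        rw [show cdist r (ψ (f u) + r/2) (ψ (f v))
            = cdist r (ψ (f u)) (ψ (f v) + r/2) from cdist_congr hr 1 (by push_cast; ring)]
        exact hc
  · intro u v huv
    show 1 ≤ cdist r (ψ (f u) + if s u then r/2 else 0)
      ((ψ (f v) + if s v then r/2 else 0) + r/2)
    by_cases hsv : s u = s v
    · have hH := hhom.2 u v (Or.inl ⟨hsv, huv⟩)
      have h2 : cdist r (ψ (f u) + if s u then r/2 else 0)
          ((ψ (f v) + if s v then r/2 else 0) + r/2)
          = cdist r (ψ (f u)) (ψ (f v) + r/2) := by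
        apply cdist_congr hr 0
        rw [hsv]
        push_cast
        ring
      rw [h2]
      exact hcol.2 _ _ hH
    · have hH := hhom.1 u v (Or.inr ⟨hsv, huv⟩)
      have hc := hcol.1 _ _ hH
      cases hsu' : s u <;> cases hsv' : s v <;> rw [hsu', hsv'] at hsv <;>
        try exact absurd rfl hsv
      · simp [hsu', hsv']
        rw [show cdist r (ψ (f u)) (ψ (f v) + r/2 + r/2)
            = cdist r (ψ (f u)) (ψ (f v)) from cdist_congr hr (-1) (by push_cast; ring)]
        exact hc
      · simp [hsu', hsv']
        rw [show cdist r (ψ (f u) + r/2) (ψ (f v) + r/2)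
            = cdist r (ψ (f u)) (ψ (f v)) from cdist_congr hr 0 (by push_cast; ring)]
        exact hc

end NWZ
namespace NWZ

open SGraph

lemma PR_of_NR_add {p q m e : ℤ} (hpm : p = 2*m) (h : NR p q e) : PR p q (e + m) := by
  intro k
  have h1 := h (k - 1)
  rw [show 2*e - p - 2*((k-1)*p) = 2*(e + m - k*p) by rw [hpm]; ring, abs_mul, abs_two] at h1
  linarith

lemma PR_of_NR_sub {p q m e : ℤ} (hpm : p = 2*m) (h : NR p q e) : PR p q (e - m) := by
  intro k
  have h1 := h k
  rw [show 2*e - p - 2*(k*p) = 2*(e - m - k*p) by rw [hpm]; ring, abs_mul, abs_two] at h1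
  linarith

lemma NR_of_PR_add {p q m e : ℤ} (hpm : p = 2*m) (h : PR p q e) : NR p q (e + m) := by
  intro k
  have h1 := h k
  rw [show 2*(e + m) - p - 2*(k*p) = 2*(e - k*p) by rw [hpm]; ring, abs_mul, abs_two]
  linarith

lemma NR_of_PR_sub {p q m e : ℤ} (hpm : p = 2*m) (h : PR p q e) : NR p q (e - m) := by
  intro k
  have h1 := h (k + 1)
  rw [show 2*(e - m) - p - 2*(k*p) = 2*(e - (k+1)*p) by rw [hpm]; ring, abs_mul, abs_two]
  linarith

lemma circChrom_le_of_coloring {V : Type} {G : SGraph V} {r : ℝ}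
    (h1 : 1 ≤ r) (h : ∃ φ : V → ℝ, G.IsCircColoring r φ) : G.circChrom ≤ r :=
  csInf_le ⟨0, fun x hx => by linarith [hx.1]⟩ ⟨h1, h⟩

end NWZ
namespace NWZ

open SGraph Filter Topology

lemma exists_coloring_of_le {V : Type} [Fintype V] {G : SGraph V} {r : ℝ} (hr0 : 0 < r)
    (hS4 : ∃ φ : V → ℝ, G.IsCircColoring 4 φ)
    (hle : G.circChrom ≤ r) :
    ∃ φ : V → ℝ, (∀ v, 0 ≤ φ v ∧ φ v < r) ∧ G.IsCircColoring r φ := by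
  have key : ∀ n : ℕ, ∃ ψ : V → ℝ, (∀ v, ψ v ∈ Set.Icc (0:ℝ) r) ∧
      (∀ u v, G.pos u v → r/(r + 1/((n:ℝ)+1)) ≤ cdist r (ψ u) (ψ v)) ∧
      (∀ u v, G.neg u v → r/(r + 1/((n:ℝ)+1)) ≤ cdist r (ψ u) (ψ v + r/2)) := by
    intro n
    set t : ℝ := r + 1/((n:ℝ)+1) with ht
    have htr : r < t := by
      rw [ht]
      have : (0:ℝ) < 1/((n:ℝ)+1) := by positivity
      linarith
    have ht0 : (0:ℝ) < t := lt_trans hr0 htr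
    have hSne : Set.Nonempty {s : ℝ | 1 ≤ s ∧ ∃ φ : V → ℝ, G.IsCircColoring s φ} :=
      ⟨4, by norm_num, hS4⟩
    have hlt : sInf {s : ℝ | 1 ≤ s ∧ ∃ φ : V → ℝ, G.IsCircColoring s φ} < t :=
      lt_of_le_of_lt hle htr
    obtain ⟨ρ, hρS, hρlt⟩ := exists_lt_of_csInf_lt hSne hlt
    obtain ⟨hρ1, φ0, hφ0⟩ := hρS
    have hρ0 : (0:ℝ) < ρ := by linarith
    have hcol2 : G.IsCircColoring t (fun v => rmod ((t/ρ) * φ0 v) t) :=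
      coloring_rmod ht0 (coloring_scale hρ0 hρlt.le hφ0)
    have hrt : (0:ℝ) < r / t := div_pos hr0 ht0
    refine ⟨fun v => (r/t) * rmod ((t/ρ) * φ0 v) t, ?_, ?_, ?_⟩
    · intro v
      constructor
      · exact mul_nonneg hrt.le (rmod_nonneg ht0 _)
      · calc (r/t) * rmod ((t/ρ) * φ0 v) t ≤ (r/t) * t :=
            mul_le_mul_of_nonneg_left (rmod_lt ht0 _).le hrt.le
        _ = r := div_mul_cancel₀ _ ht0.ne'
    · intro u v huv
      have h1 := hcol2.1 u v huv
      have h2 := cdist_scale (r := t) (x := rmod ((t/ρ) * φ0 u) t)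
        (y := rmod ((t/ρ) * φ0 v) t) (c := r/t) hrt
      rw [div_mul_cancel₀ _ ht0.ne'] at h2
      show r/t ≤ cdist r ((r/t) * rmod ((t/ρ) * φ0 u) t) ((r/t) * rmod ((t/ρ) * φ0 v) t)
      rw [h2]
      nlinarith
    · intro u v huv
      have h1 := hcol2.2 u v huv
      have h2 := cdist_scale (r := t) (x := rmod ((t/ρ) * φ0 u) t)
        (y := rmod ((t/ρ) * φ0 v) t + t/2) (c := r/t) hrt
      rw [div_mul_cancel₀ _ ht0.ne'] at h2
      have h3 : (r/t) * (rmod ((t/ρ) * φ0 v) t + t/2) = (r/t) * rmod ((t/ρ) * φ0 v) t + r/2 := by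
        field_simp
      rw [h3] at h2
      show r/t ≤ cdist r ((r/t) * rmod ((t/ρ) * φ0 u) t) ((r/t) * rmod ((t/ρ) * φ0 v) t + r/2)
      rw [h2]
      nlinarith
  choose ψ hIcc hposc hnegc using key
  have hK : IsCompact (Set.univ.pi fun _ : V => Set.Icc (0:ℝ) r) :=
    isCompact_univ_pi fun _ => isCompact_Icc
  have hmem : ∀ n, ψ n ∈ Set.univ.pi fun _ : V => Set.Icc (0:ℝ) r :=
    fun n => fun v _ => hIcc n v
  obtain ⟨Ψ, _, σ, hσ, htd⟩ := hK.tendsto_subseq hmem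
  have htd' : ∀ v, Tendsto (fun j => ψ (σ j) v) atTop (𝓝 (Ψ v)) := by
    intro v
    exact tendsto_pi_nhds.mp htd v
  have hclim : Tendsto (fun n : ℕ => r/(r + 1/((n:ℝ)+1))) atTop (𝓝 1) := by
    have h1 : Tendsto (fun n : ℕ => r + 1/((n:ℝ)+1)) atTop (𝓝 (r + 0)) :=
      tendsto_const_nhds.add tendsto_one_div_add_atTop_nhds_zero_nat
    rw [add_zero] at h1
    have h2 := (tendsto_const_nhds (x := r) (f := atTop (α := ℕ))).div h1 hr0.ne'
    rw [div_self hr0.ne'] at h2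
    exact h2
  have hclimσ : Tendsto (fun j : ℕ => r/(r + 1/((σ j : ℝ)+1))) atTop (𝓝 1) :=
    hclim.comp hσ.tendsto_atTop
  have habs : ∀ v, Tendsto (fun j => |ψ (σ j) v - Ψ v|) atTop (𝓝 0) := by
    intro v
    have := ((htd' v).sub (tendsto_const_nhds (x := Ψ v))).abs
    simpa using this
  have hΨcol : G.IsCircColoring r Ψ := by
    constructor
    · intro u v huv
      have hcd : Tendsto (fun j => cdist r (ψ (σ j) u) (ψ (σ j) v)) atTop
          (𝓝 (cdist r (Ψ u) (Ψ v))) := by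
        apply tendsto_of_tendsto_of_tendsto_of_le_of_le
          (g := fun j => cdist r (Ψ u) (Ψ v) - |ψ (σ j) u - Ψ u| - |ψ (σ j) v - Ψ v|)
          (h := fun j => cdist r (Ψ u) (Ψ v) + |ψ (σ j) u - Ψ u| + |ψ (σ j) v - Ψ v|)
        · have := (tendsto_const_nhds (x := cdist r (Ψ u) (Ψ v)) (f := atTop (α := ℕ))).sub
            ((habs u).add (habs v))
          simpa [sub_sub] using this
        · have := (tendsto_const_nhds (x := cdist r (Ψ u) (Ψ v)) (f := atTop (α := ℕ))).add
            ((habs u).add (habs v))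
          simpa [add_assoc] using this
        · intro j
          have := cdist_lip hr0 (Ψ u) (Ψ v) (ψ (σ j) u) (ψ (σ j) v)
          rw [abs_sub_comm (Ψ u) _, abs_sub_comm (Ψ v) _] at this
          dsimp only
          linarith
        · intro j
          exact cdist_lip hr0 (ψ (σ j) u) (ψ (σ j) v) (Ψ u) (Ψ v)
      exact le_of_tendsto_of_tendsto' hclimσ hcd (fun j => hposc (σ j) u v huv)
    · intro u v huv
      have hcd : Tendsto (fun j => cdist r (ψ (σ j) u) (ψ (σ j) v + r/2)) atTop
          (𝓝 (cdist r (Ψ u) (Ψ v + r/2))) := by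
        apply tendsto_of_tendsto_of_tendsto_of_le_of_le
          (g := fun j => cdist r (Ψ u) (Ψ v + r/2) - |ψ (σ j) u - Ψ u| - |ψ (σ j) v - Ψ v|)
          (h := fun j => cdist r (Ψ u) (Ψ v + r/2) + |ψ (σ j) u - Ψ u| + |ψ (σ j) v - Ψ v|)
        · have := (tendsto_const_nhds (x := cdist r (Ψ u) (Ψ v + r/2)) (f := atTop (α := ℕ))).sub
            ((habs u).add (habs v))
          simpa [sub_sub] using this
        · have := (tendsto_const_nhds (x := cdist r (Ψ u) (Ψ v + r/2)) (f := atTop (α := ℕ))).add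
            ((habs u).add (habs v))
          simpa [add_assoc] using this
        · intro j
          have := cdist_lip hr0 (Ψ u) (Ψ v + r/2) (ψ (σ j) u) (ψ (σ j) v + r/2)
          rw [abs_sub_comm (Ψ u) _] at this
          rw [show Ψ v + r/2 - (ψ (σ j) v + r/2) = Ψ v - ψ (σ j) v by ring,
            abs_sub_comm (Ψ v) _] at this
          dsimp only
          linarith
        · intro j
          have := cdist_lip hr0 (ψ (σ j) u) (ψ (σ j) v + r/2) (Ψ u) (Ψ v + r/2)
          rw [show ψ (σ j) v + r/2 - (Ψ v + r/2) = ψ (σ j) v - Ψ v by ring] at this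
          dsimp only
          linarith
      exact le_of_tendsto_of_tendsto' hclimσ hcd (fun j => hnegc (σ j) u v huv)
  exact ⟨fun v => rmod (Ψ v) r, fun v => ⟨rmod_nonneg hr0 _, rmod_lt hr0 _⟩,
    coloring_rmod hr0 hΨcol⟩

end NWZ
namespace NWZ

open SGraph

/-- integer reduced mod `p` as an element of `Fin p` -/
def finOf {p : ℕ} (hp : 0 < p) (x : ℤ) : Fin p :=
  ⟨(x % p).toNat, by
    have hpz : (0:ℤ) < p := by exact_mod_cast hp
    have h0 : 0 ≤ x % p := Int.emod_nonneg x hpz.ne'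
    have h1 : x % p < p := Int.emod_lt_of_pos x hpz
    omega⟩

lemma finOf_val {p : ℕ} (hp : 0 < p) (x : ℤ) : (((finOf hp x).val : ℕ) : ℤ) = x % p := by
  have hpz : (0:ℤ) < p := by exact_mod_cast hp
  exact Int.toNat_of_nonneg (Int.emod_nonneg x hpz.ne')

lemma finOf_diff {p : ℕ} (hp : 0 < p) (x y : ℤ) :
    ∃ j : ℤ, (((finOf hp x).val : ℕ) : ℤ) - (((finOf hp y).val : ℕ) : ℤ) = (x - y) + j * p :=
  ⟨y / p - x / p, by rw [finOf_val, finOf_val, Int.emod_def, Int.emod_def]; ring⟩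

lemma finOf_parity {p : ℕ} (hp : 0 < p) (hpe : 2 ∣ p) (x : ℤ) :
    (((finOf hp x).val % 2 : ℕ) : ℤ) = x % 2 := by
  have h1 : (((finOf hp x).val % 2 : ℕ) : ℤ) = (((finOf hp x).val : ℕ) : ℤ) % 2 := by
    push_cast
    ring
  rw [h1, finOf_val]
  exact Int.emod_emod_of_dvd x (by exact_mod_cast hpe)

lemma roundCaseA {V : Type} {G : SGraph V} {c : V → Bool} {p q m : ℕ} (hq : 0 < q)
    (h2q : 2*q ≤ p) (hm : p = 2*m) (hmeven : Even m) (hqodd : q % 2 = 1)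
    (hc : ∀ u v, G.pos u v ∨ G.neg u v → c u ≠ c v)
    (a : V → ℝ)
    (RPos : ∀ u v, G.pos u v → ∀ k : ℤ, (q:ℝ) ≤ |a u - a v - (k:ℝ)*(p:ℝ)|)
    (RNeg : ∀ u v, G.neg u v → ∀ k : ℤ,
      2*(q:ℝ) ≤ |2*(a u) - 2*(a v) - (p:ℝ) - (k:ℝ)*(2*(p:ℝ))|) :
    G.SwHom (Bclique p q) := by
  have hp0 : 0 < p := by omega
  obtain ⟨m2, hm2⟩ := hmeven
  set cz : V → ℤ := fun v => if c v then 1 else 0 with hczdef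
  have hcz01 : ∀ v, cz v = 0 ∨ cz v = 1 := by
    intro v
    by_cases h : c v <;> simp [hczdef, h]
  have hczne : ∀ u v, c u ≠ c v → cz u ≠ cz v := by
    intro u v hne
    cases hcu : c u <;> cases hcv : c v <;> rw [hcu, hcv] at hne <;>
      simp [hczdef, hcu, hcv] <;> exact absurd rfl hne
  set f0 : V → ℤ := fun v => 2*⌊(a v - (cz v : ℝ) + 1)/2⌋ + cz v with hf0def
  have hδ : ∀ v, -1 < (f0 v : ℝ) - a v ∧ (f0 v : ℝ) - a v ≤ 1 := by
    intro v
    have hL1 : ((⌊(a v - (cz v:ℝ) + 1)/2⌋ : ℤ):ℝ) ≤ (a v - (cz v:ℝ) + 1)/2 := Int.floor_le _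
    have hL2 : (a v - (cz v:ℝ) + 1)/2 - 1 < ((⌊(a v - (cz v:ℝ) + 1)/2⌋ : ℤ):ℝ) :=
      Int.sub_one_lt_floor _
    have hf : (f0 v : ℝ) = 2*((⌊(a v - (cz v:ℝ) + 1)/2⌋ : ℤ):ℝ) + (cz v : ℝ) := by
      rw [hf0def]
      push_cast
      ring
    rw [hf]
    constructor <;> linarith
  have hpar : ∀ v, f0 v % 2 = cz v := by
    intro v
    obtain ⟨L, hL⟩ : ∃ L : ℤ, f0 v = 2*L + cz v := ⟨_, rfl⟩
    rcases hcz01 v with h | h <;> omega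
  have he : ∀ u v, c u ≠ c v → (f0 u - f0 v) % 2 = 1 := by
    intro u v hne
    have h1 := hpar u
    have h2 := hpar v
    have h3 := hczne u v hne
    rcases hcz01 u with h4 | h4 <;> rcases hcz01 v with h5 | h5 <;> omega
  have hqz : (q:ℤ) % 2 = 1 := by omega
  have hpz : (p:ℤ) = 4*(m2:ℤ) := by push_cast; omega
  -- positive edges
  have PRe : ∀ u v, G.pos u v → PR p q (f0 u - f0 v) := by
    intro u v huv
    have key := roundKey (cq := (q:ℤ)) (P := (p:ℤ)) (E := f0 u - f0 v)
      (A := a u - a v) (g := 2)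
      (by
        have d1 := hδ u
        have d2 := hδ v
        rw [abs_lt]
        push_cast
        constructor <;> linarith)
      (by
        intro k
        have := RPos u v huv k
        push_cast
        exact this)
      (by
        intro k hk
        obtain ⟨w, hw⟩ : ∃ w : ℤ, k * (p:ℤ) = 2*w := ⟨k*(2*m2), by rw [hpz]; ring⟩
        have heo := he u v (hc u v (Or.inl huv))
        rw [hw] at hk ⊢
        rcases abs_cases (f0 u - f0 v - 2*w) with ⟨h1, _⟩ | ⟨h1, _⟩ <;>
          rw [h1] at hk ⊢ <;> omega)
    exact key
  -- negative edges
  have NRe : ∀ u v, G.neg u v → NR p q (f0 u - f0 v) := by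
    intro u v huv
    have key := roundKey (cq := 2*(q:ℤ)) (P := 2*(p:ℤ)) (E := 2*(f0 u - f0 v) - p)
      (A := 2*(a u) - 2*(a v) - (p:ℝ)) (g := 4)
      (by
        have d1 := hδ u
        have d2 := hδ v
        rw [abs_lt]
        push_cast
        constructor <;> linarith)
      (by
        intro k
        have := RNeg u v huv k
        push_cast
        exact this)
      (by
        intro k hk
        obtain ⟨w, hw⟩ : ∃ w : ℤ, k * (2*(p:ℤ)) = 8*w := ⟨k*m2, by rw [hpz]; ring⟩
        have heo := he u v (hc u v (Or.inr huv))
        rw [hw] at hk ⊢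
        rcases abs_cases (2*(f0 u - f0 v) - (p:ℤ) - 8*w) with ⟨h1, _⟩ | ⟨h1, _⟩ <;>
          rw [h1] at hk ⊢ <;> omega)
    intro k
    have := key k
    rw [show 2*(f0 u - f0 v) - (p:ℤ) - (k * (2*(p:ℤ))) = 2*(f0 u - f0 v) - p - 2*(k*p) by ring]
        at this
    exact this
  -- parity of images
  have hFpar : ∀ v, (((finOf hp0 (f0 v)).val % 2 : ℕ) : ℤ) = cz v := by
    intro v
    rw [finOf_parity hp0 ⟨m, hm⟩, hpar v]
  have hedge : ∀ u v, c u ≠ c v →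
      (finOf hp0 (f0 u)).val % 2 ≠ (finOf hp0 (f0 v)).val % 2 := by
    intro u v hne heq
    apply hczne u v hne
    rw [← hFpar u, ← hFpar v, heq]
  refine ⟨fun _ => false, fun v => finOf hp0 (f0 v), ?_, ?_⟩
  · rintro u v (⟨_, huv⟩ | ⟨hne, _⟩)
    · refine ⟨(Kspos_iff hq h2q _ _).mpr ?_, hedge u v (hc u v (Or.inl huv))⟩
      obtain ⟨j, hj⟩ := finOf_diff hp0 (f0 u) (f0 v)
      rw [hj]
      exact PR_shift (PRe u v huv) j
    · exact absurd rfl hne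
  · rintro u v (⟨_, huv⟩ | ⟨hne, _⟩)
    · refine ⟨(Ksneg_iff hq h2q _ _).mpr ?_, hedge u v (hc u v (Or.inr huv))⟩
      obtain ⟨j, hj⟩ := finOf_diff hp0 (f0 u) (f0 v)
      rw [hj]
      exact NR_shift (NRe u v huv) j
    · exact absurd rfl hne

end NWZ
namespace NWZ

open SGraph

lemma roundCaseB {V : Type} {G : SGraph V} {c : V → Bool} {p q m : ℕ} (hq : 0 < q)
    (h2q : 2*q ≤ p) (hm : p = 2*m) (hmodd : Odd m)
    (hc : ∀ u v, G.pos u v ∨ G.neg u v → c u ≠ c v)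
    (a : V → ℝ)
    (RPos : ∀ u v, G.pos u v → ∀ k : ℤ, (q:ℝ) ≤ |a u - a v - (k:ℝ)*(p:ℝ)|)
    (RNeg : ∀ u v, G.neg u v → ∀ k : ℤ,
      2*(q:ℝ) ≤ |2*(a u) - 2*(a v) - (p:ℝ) - (k:ℝ)*(2*(p:ℝ))|) :
    G.SwHom (Bclique p q) := by
  have hp0 : 0 < p := by omega
  have hmz : (p:ℤ) = 2*(m:ℤ) := by push_cast; omega
  have hmo : (m:ℤ) % 2 = 1 := by
    have := Nat.odd_iff.mp hmodd
    omega
  set cz : V → ℤ := fun v => if c v then 1 else 0 with hczdef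
  have hcz01 : ∀ v, cz v = 0 ∨ cz v = 1 := by
    intro v
    by_cases h : c v <;> simp [hczdef, h]
  have hczne : ∀ u v, c u ≠ c v → cz u ≠ cz v := by
    intro u v hne
    cases hcu : c u <;> cases hcv : c v <;> rw [hcu, hcv] at hne <;>
      simp [hczdef, hcu, hcv] <;> exact absurd rfl hne
  set f0 : V → ℤ := fun v => ⌊a v⌋ with hf0def
  have hδ : ∀ v, 0 ≤ a v - (f0 v : ℝ) ∧ a v - (f0 v : ℝ) < 1 := by
    intro v
    have h1 : ((⌊a v⌋ : ℤ) : ℝ) ≤ a v := Int.floor_le _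
    have h2 : a v < ((⌊a v⌋ : ℤ) : ℝ) + 1 := Int.lt_floor_add_one _
    constructor <;> simp only [hf0def] <;> linarith
  set s : V → Bool := fun v => if f0 v % 2 = cz v then false else true with hsdef
  set g : V → ℤ := fun v => f0 v + (if s v then (m:ℤ) else 0) with hgdef
  have hgpar : ∀ v, g v % 2 = cz v := by
    intro v
    by_cases h : f0 v % 2 = cz v
    · have hs : s v = false := by simp [hsdef, h]
      have hg : g v = f0 v := by simp [hgdef, hs]
      omega
    · have hs : s v = true := by simp [hsdef, h]
      have hg : g v = f0 v + m := by simp [hgdef, hs]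
      rcases hcz01 v with h1 | h1 <;> omega
  -- positive edges give PR for the floor values
  have PRe : ∀ u v, G.pos u v → PR p q (f0 u - f0 v) := by
    intro u v huv
    exact roundKey (cq := (q:ℤ)) (P := (p:ℤ)) (E := f0 u - f0 v)
      (A := a u - a v) (g := 1)
      (by
        have d1 := hδ u
        have d2 := hδ v
        rw [abs_lt]
        push_cast
        constructor <;> linarith)
      (by
        intro k
        have := RPos u v huv k
        push_cast
        exact this)
      (by
        intro k hk
        obtain ⟨w, hw⟩ : ∃ w : ℤ, k * (p:ℤ) = w := ⟨_, rfl⟩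
        rw [hw] at hk ⊢
        rcases abs_cases (f0 u - f0 v - w) with ⟨h1, _⟩ | ⟨h1, _⟩ <;>
          rw [h1] at hk ⊢ <;> omega)
  -- negative edges give NR for the floor values
  have NRe : ∀ u v, G.neg u v → NR p q (f0 u - f0 v) := by
    intro u v huv
    have key := roundKey (cq := 2*(q:ℤ)) (P := 2*(p:ℤ)) (E := 2*(f0 u - f0 v) - p)
      (A := 2*(a u) - 2*(a v) - (p:ℝ)) (g := 2)
      (by
        have d1 := hδ u
        have d2 := hδ v
        rw [abs_lt]
        push_cast
        constructor <;> linarith)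
      (by
        intro k
        have := RNeg u v huv k
        push_cast
        exact this)
      (by
        intro k hk
        obtain ⟨w, hw⟩ : ∃ w : ℤ, k * (2*(p:ℤ)) = 2*w := ⟨k*p, by ring⟩
        rw [hw] at hk ⊢
        rcases abs_cases (2*(f0 u - f0 v) - (p:ℤ) - 2*w) with ⟨h1, _⟩ | ⟨h1, _⟩ <;>
          rw [h1] at hk ⊢ <;> omega)
    intro k
    have := key k
    rw [show 2*(f0 u - f0 v) - (p:ℤ) - (k * (2*(p:ℤ))) = 2*(f0 u - f0 v) - p - 2*(k*p) by ring]
        at this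
    exact this
  -- parity of images
  have hFpar : ∀ v, (((finOf hp0 (g v)).val % 2 : ℕ) : ℤ) = cz v := by
    intro v
    rw [finOf_parity hp0 ⟨m, hm⟩, hgpar v]
  have hedge : ∀ u v, c u ≠ c v →
      (finOf hp0 (g u)).val % 2 ≠ (finOf hp0 (g v)).val % 2 := by
    intro u v hne heq
    apply hczne u v hne
    rw [← hFpar u, ← hFpar v, heq]
  -- difference decompositions
  have hdiff_eq : ∀ u v, s u = s v → g u - g v = f0 u - f0 v := by
    intro u v hsv
    simp only [hgdef, hsv]
    ring
  refine ⟨s, fun v => finOf hp0 (g v), ?_, ?_⟩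
  · rintro u v (⟨hsv, huv⟩ | ⟨hsv, huv⟩)
    · refine ⟨(Kspos_iff hq h2q _ _).mpr ?_, hedge u v (hc u v (Or.inl huv))⟩
      obtain ⟨j, hj⟩ := finOf_diff hp0 (g u) (g v)
      rw [hj, hdiff_eq u v hsv]
      exact PR_shift (PRe u v huv) j
    · refine ⟨(Kspos_iff hq h2q _ _).mpr ?_, hedge u v (hc u v (Or.inr huv))⟩
      obtain ⟨j, hj⟩ := finOf_diff hp0 (g u) (g v)
      rw [hj]
      apply PR_shift _ j
      cases hsu' : s u <;> cases hsv' : s v <;> rw [hsu', hsv'] at hsv <;>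
        try exact absurd rfl hsv
      · have hg : g u - g v = (f0 u - f0 v) - m := by
          simp only [hgdef, hsu', hsv']
          simp
          ring
        rw [hg]
        exact PR_of_NR_sub hmz (NRe u v huv)
      · have hg : g u - g v = (f0 u - f0 v) + m := by
          simp only [hgdef, hsu', hsv']
          simp
          ring
        rw [hg]
        exact PR_of_NR_add hmz (NRe u v huv)
  · rintro u v (⟨hsv, huv⟩ | ⟨hsv, huv⟩)
    · refine ⟨(Ksneg_iff hq h2q _ _).mpr ?_, hedge u v (hc u v (Or.inr huv))⟩
      obtain ⟨j, hj⟩ := finOf_diff hp0 (g u) (g v)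
      rw [hj, hdiff_eq u v hsv]
      exact NR_shift (NRe u v huv) j
    · refine ⟨(Ksneg_iff hq h2q _ _).mpr ?_, hedge u v (hc u v (Or.inl huv))⟩
      obtain ⟨j, hj⟩ := finOf_diff hp0 (g u) (g v)
      rw [hj]
      apply NR_shift _ j
      cases hsu' : s u <;> cases hsv' : s v <;> rw [hsu', hsv'] at hsv <;>
        try exact absurd rfl hsv
      · have hg : g u - g v = (f0 u - f0 v) - m := by
          simp only [hgdef, hsu', hsv']
          simp
          ring
        rw [hg]
        exact NR_of_PR_sub hmz (PRe u v huv)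
      · have hg : g u - g v = (f0 u - f0 v) + m := by
          simp only [hgdef, hsu', hsv']
          simp
          ring
        rw [hg]
        exact NR_of_PR_add hmz (PRe u v huv)

end NWZ
/-- for a signed bipartite graph `(G,σ)` and `p/q ∈ [2,4]`, `p` even and
`p/q` in simplest form subject to that, `χ_c(G,σ) ≤ p/q` iff `(G,σ)` admits a
switching homomorphism to `B_{p;q}`. -/
theorem circChrom_le_iff_swHom_Bclique {V : Type} [Fintype V] (G : SGraph V)
    (hbip : G.Bipartite) (p q : ℕ) (hp : 2 ∣ p) (hq : 0 < q) (h2q : 2 * q ≤ p)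
    (h4q : p ≤ 4 * q)
    (hsimp : Nat.gcd p q ≤ 2 ∧ (Nat.gcd p q = 2 → p % 4 = 2)) :
    G.circChrom ≤ (p : ℝ) / q ↔ G.SwHom (Bclique p q) := by
  have hq' : (0:ℝ) < q := by exact_mod_cast hq
  have hp0 : 0 < p := by omega
  have hp' : (0:ℝ) < p := by exact_mod_cast hp0
  have hr0 : (0:ℝ) < (p:ℝ)/q := div_pos hp' hq'
  have hr1 : (1:ℝ) ≤ (p:ℝ)/q := by
    rw [le_div_iff₀ hq', one_mul]
    exact_mod_cast (by omega : q ≤ p)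
  obtain ⟨c, hc⟩ := hbip
  constructor
  · intro hle
    have hS4 : ∃ φ : V → ℝ, G.IsCircColoring 4 φ := ⟨_, NWZ.bip_coloring hc⟩
    obtain ⟨φ, hφb, hcol⟩ := NWZ.exists_coloring_of_le hr0 hS4 hle
    have hqr : (q:ℝ) * ((p:ℝ)/q) = p := by field_simp
    have RPos : ∀ u v, G.pos u v → ∀ k : ℤ,
        (q:ℝ) ≤ |(q:ℝ) * φ u - (q:ℝ) * φ v - (k:ℝ)*(p:ℝ)| := by
      intro u v huv k
      have h1 := hcol.1 u v huv
      have h2 := NWZ.cdist_scale (r := (p:ℝ)/q) (x := φ u) (y := φ v) (c := (q:ℝ)) hq'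
      rw [hqr] at h2
      have h3 : (q:ℝ) ≤ cdist p ((q:ℝ) * φ u) ((q:ℝ) * φ v) := by
        rw [h2]
        nlinarith
      have h4 := NWZ.cdist_le_abs hp' ((q:ℝ) * φ u) ((q:ℝ) * φ v) k
      linarith
    have RNeg : ∀ u v, G.neg u v → ∀ k : ℤ,
        2*(q:ℝ) ≤ |2*((q:ℝ) * φ u) - 2*((q:ℝ) * φ v) - (p:ℝ) - (k:ℝ)*(2*(p:ℝ))| := by
      intro u v huv k
      have h1 := hcol.2 u v huv
      have h2 := NWZ.cdist_scale (r := (p:ℝ)/q) (x := φ u) (y := φ v + ((p:ℝ)/q)/2)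
        (c := (q:ℝ)) hq'
      rw [hqr] at h2
      have h5 : (q:ℝ) * (φ v + ((p:ℝ)/q)/2) = (q:ℝ) * φ v + (p:ℝ)/2 := by
        field_simp
      rw [h5] at h2
      have h3 : (q:ℝ) ≤ cdist p ((q:ℝ) * φ u) ((q:ℝ) * φ v + (p:ℝ)/2) := by
        rw [h2]
        nlinarith
      have h4 := NWZ.cdist_le_abs hp' ((q:ℝ) * φ u) ((q:ℝ) * φ v + (p:ℝ)/2) k
      rw [show 2*((q:ℝ) * φ u) - 2*((q:ℝ) * φ v) - (p:ℝ) - (k:ℝ)*(2*(p:ℝ))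
          = 2*((q:ℝ) * φ u - ((q:ℝ) * φ v + (p:ℝ)/2) - (k:ℝ)*(p:ℝ)) by ring,
        abs_mul, abs_two]
      linarith
    obtain ⟨m, hm⟩ := hp
    rcases Nat.even_or_odd m with hme | hmo
    · have hqodd : q % 2 = 1 := by
        rcases Nat.even_or_odd q with hqe | hqo
        · exfalso
          obtain ⟨q2, hq2⟩ := hqe
          have hdvd : 2 ∣ Nat.gcd p q := Nat.dvd_gcd ⟨m, hm⟩ ⟨q2, by omega⟩
          have hge : 2 ≤ Nat.gcd p q :=
            Nat.le_of_dvd (Nat.gcd_pos_of_pos_right p hq) hdvd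
          have h42 := hsimp.2 (le_antisymm hsimp.1 hge)
          obtain ⟨m2, hm2⟩ := hme
          omega
        · exact Nat.odd_iff.mp hqo
      exact NWZ.roundCaseA hq h2q hm hme hqodd hc (fun v => (q:ℝ) * φ v) RPos RNeg
    · exact NWZ.roundCaseB hq h2q hm hmo hc (fun v => (q:ℝ) * φ v) RPos RNeg
  · rintro ⟨s, f, hhom⟩
    exact NWZ.circChrom_le_of_coloring hr1
      ⟨_, NWZ.coloring_of_swhom hr0 (NWZ.B_coloring hq h2q) hhom⟩
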